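/- arXiv:2602.09780 — 8 statements merged into one kernel-verified Lean document; each statement's English description precedes it below -/
import Mathlib

section
/- Let G be a pomonoid with centre Z(G), C a symmetric monoidal category, and T a strong G-graded monad on C that is centralisable with centre Z (graded by Z(G)). Let S be a strong Z(G)-graded submonad of T with strong submonad monomorphism ι : S → T. Then the following are equivalent: (1) for every z ∈ Z(G) and every object X of C, the pair (S^z X, ι^z_X) is a graded central cone of T at (z,X); (2) S is a commutative graded submonad of the centre Z of T, with a submonad morphism ι^S : S → Z such that ι : S → T factorises through ι^S. -/
open CategoryTheory MonoidalCategory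

universe v u

variable (G : Type*) [Monoid G] [PartialOrder G] [MulLeftMono G] [MulRightMono G]
variable (C : Type u) [Category.{v} C]

/-- A pomonoid-graded monad on a category `C`, graded by the pomonoid `G`
(a monoid with a partial order for which multiplication is monotone in both arguments). -/
structure GradedMonad where
  /-- the graded family of endofunctors -/
  T : G → C ⥤ C
  /-- the unit -/
  η : 𝟭 C ⟶ T 1
  /-- the graded multiplication; `(μ a b).app X : T^a (T^b X) ⟶ T^{a*b} X` -/
  μ : ∀ a b : G, T b ⋙ T a ⟶ T (a * b)
  /-- the order natural transformations `T^{a ≤ a'}` -/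
  ord : ∀ {a a' : G}, a ≤ a' → (T a ⟶ T a')
  ord_refl : ∀ a : G, ord (le_refl a) = 𝟙 (T a)
  ord_trans : ∀ {a a' a'' : G} (h : a ≤ a') (h' : a' ≤ a''), ord h ≫ ord h' = ord (h.trans h')
  left_unit : ∀ (a : G) (X : C),
    η.app ((T a).obj X) ≫ (μ 1 a).app X = eqToHom (by rw [one_mul]; rfl)
  right_unit : ∀ (a : G) (X : C),
    (T a).map (η.app X) ≫ (μ a 1).app X = eqToHom (by rw [mul_one]; rfl)
  assoc : ∀ (a b c : G) (X : C),
    (T a).map ((μ b c).app X) ≫ (μ a (b * c)).app X =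
      (μ a b).app ((T c).obj X) ≫ (μ (a * b) c).app X ≫ eqToHom (by rw [mul_assoc])
  μ_ord : ∀ {a a' b b' : G} (h : a ≤ a') (h' : b ≤ b') (X : C),
    (μ a b).app X ≫ (ord (mul_le_mul' h h')).app X =
      (T a).map ((ord h').app X) ≫ (ord h).app ((T b').obj X) ≫ (μ a' b').app X

variable [MonoidalCategory C]

/-- A strong pomonoid-graded monad: a graded monad with a graded strength. -/
structure StrongGradedMonad extends GradedMonad G C where
  /-- the graded strength -/
  τ : ∀ (a : G) (X Y : C), X ⊗ (T a).obj Y ⟶ (T a).obj (X ⊗ Y)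
  τ_natural : ∀ (a : G) {X X' Y Y' : C} (f : X ⟶ X') (g : Y ⟶ Y'),
    (f ⊗ₘ (T a).map g) ≫ τ a X' Y' = τ a X Y ≫ (T a).map (f ⊗ₘ g)
  τ_unitor : ∀ (a : G) (X : C),
    τ a (𝟙_ C) X ≫ (T a).map (λ_ X).hom = (λ_ ((T a).obj X)).hom
  τ_assoc : ∀ (a : G) (X Y Z : C),
    (α_ X Y ((T a).obj Z)).hom ≫ (𝟙 X ⊗ₘ τ a Y Z) ≫ τ a X (Y ⊗ Z) =
      τ a (X ⊗ Y) Z ≫ (T a).map (α_ X Y Z).hom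
  τ_η : ∀ (X Y : C), (𝟙 X ⊗ₘ η.app Y) ≫ τ 1 X Y = η.app (X ⊗ Y)
  τ_μ : ∀ (a b : G) (X Y : C),
    (𝟙 X ⊗ₘ (μ a b).app Y) ≫ τ (a * b) X Y =
      τ a X ((T b).obj Y) ≫ (T a).map (τ b X Y) ≫ (μ a b).app (X ⊗ Y)
  τ_ord : ∀ {a a' : G} (h : a ≤ a') (X Y : C),
    (𝟙 X ⊗ₘ (ord h).app Y) ≫ τ a' X Y = τ a X Y ≫ (ord h).app (X ⊗ Y)

variable {G C}

namespace StrongGradedMonad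

variable [BraidedCategory C]

/-- The graded costrength `τ'^a_{X,Y} := T^a(γ) ∘ τ^a ∘ γ`. -/
def costr (M : StrongGradedMonad G C) (a : G) (X Y : C) :
    (M.T a).obj X ⊗ Y ⟶ (M.T a).obj (X ⊗ Y) :=
  (β_ ((M.T a).obj X) Y).hom ≫ M.τ a Y X ≫ (M.T a).map (β_ Y X).hom

/-- A strong graded monad is commutative when the two double-strength maps agree
(for all gradations `a`, `b` for which `a * b = b * a`, so that the equation typechecks;
in particular if the grading pomonoid is commutative this is required for all pairs). -/
def IsCommutative (M : StrongGradedMonad G C) : Prop :=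
  ∀ (a b : G) (h : a * b = b * a) (X Y : C),
    M.costr a X ((M.T b).obj Y) ≫ (M.T a).map (M.τ b X Y) ≫ (M.μ a b).app (X ⊗ Y) =
      M.τ b ((M.T a).obj X) Y ≫ (M.T b).map (M.costr a X Y) ≫ (M.μ b a).app (X ⊗ Y) ≫
        eqToHom (by rw [h])

/-- A graded central cone of `M` at `(z, X)` (where `z` is central in `G`),
with apex `Z` and map `ι : Z ⟶ T^z X`. -/
def CentralCone (M : StrongGradedMonad G C) (z : G) (hz : ∀ b : G, z * b = b * z)
    (X Z : C) (ι : Z ⟶ (M.T z).obj X) : Prop :=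
  ∀ (b : G) (Y : C),
    (ι ⊗ₘ 𝟙 ((M.T b).obj Y)) ≫ M.costr z X ((M.T b).obj Y) ≫
        (M.T z).map (M.τ b X Y) ≫ (M.μ z b).app (X ⊗ Y) =
      (ι ⊗ₘ 𝟙 ((M.T b).obj Y)) ≫ M.τ b ((M.T z).obj X) Y ≫
        (M.T b).map (M.costr z X Y) ≫ (M.μ b z).app (X ⊗ Y) ≫ eqToHom (by rw [hz b])

/-- A terminal graded central cone at `(z, X)`: a graded central cone through which every
graded central cone at `(z, X)` factors uniquely. -/
def IsTerminalCentralCone (M : StrongGradedMonad G C) (z : G) (hz : ∀ b : G, z * b = b * z)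
    (X Z : C) (ι : Z ⟶ (M.T z).obj X) : Prop :=
  M.CentralCone z hz X Z ι ∧
    ∀ (W : C) (f : W ⟶ (M.T z).obj X), M.CentralCone z hz X W f →
      ∃! φ : W ⟶ Z, φ ≫ ι = f

/-- A strong graded monad is centralisable when it has a terminal graded central cone
at `(z, X)` for every central `z` and every object `X`. -/
def Centralisable (M : StrongGradedMonad G C) : Prop :=
  ∀ (z : G) (hz : ∀ b : G, z * b = b * z) (X : C),
    ∃ (Z : C) (ι : Z ⟶ (M.T z).obj X), M.IsTerminalCentralCone z hz X Z ι

end StrongGradedMonad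

/-- A morphism of strong graded monads, over a pomonoid morphism `φ` between the gradations
(i.e. `1 ≤ φ 1` and `φ a * φ b ≤ φ (a * b)`). -/
structure StrongGradedMonadHom
    {G : Type*} [Monoid G] [PartialOrder G] [MulLeftMono G] [MulRightMono G]
    {H : Type*} [Monoid H] [PartialOrder H] [MulLeftMono H] [MulRightMono H]
    {C : Type u} [Category.{v} C] [MonoidalCategory C]
    (M : StrongGradedMonad G C) (P : StrongGradedMonad H C)
    (φ : G → H) (φ_one : 1 ≤ φ 1) (φ_mul : ∀ a b : G, φ a * φ b ≤ φ (a * b)) where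
  app : ∀ a : G, M.T a ⟶ P.T (φ a)
  unit : ∀ X : C, M.η.app X ≫ (app 1).app X = P.η.app X ≫ (P.ord φ_one).app X
  mul : ∀ (a b : G) (X : C),
    (M.μ a b).app X ≫ (app (a * b)).app X =
      (app a).app ((M.T b).obj X) ≫ (P.T (φ a)).map ((app b).app X) ≫
        (P.μ (φ a) (φ b)).app X ≫ (P.ord (φ_mul a b)).app X
  strength : ∀ (a : G) (X Y : C),
    (𝟙 X ⊗ₘ (app a).app Y) ≫ P.τ (φ a) X Y = M.τ a X Y ≫ (app a).app (X ⊗ Y)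

/-- Every element of the centre of a monoid commutes with every element. -/
def centerComm {G : Type*} [Monoid G] (z : Submonoid.center G) :
    ∀ b : G, (z : G) * b = b * (z : G) :=
  fun b => (Submonoid.mem_center_iff.mp z.prop b).symm

section CenterInstances
variable {G : Type*} [Monoid G] [PartialOrder G] [MulLeftMono G] [MulRightMono G]

instance : MulLeftMono (Submonoid.center G) :=
  ⟨fun a b c h => show ((a * b : Submonoid.center G) : G) ≤ ((a * c : Submonoid.center G) : G) from
    mul_le_mul_right (Subtype.coe_le_coe.mpr h) (a : G)⟩

instance : MulRightMono (Submonoid.center G) :=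
  ⟨fun a b c h => show ((b * a : Submonoid.center G) : G) ≤ ((c * a : Submonoid.center G) : G) from
    mul_le_mul_left (Subtype.coe_le_coe.mpr h) (a : G)⟩

end CenterInstances


section Helpers

variable {G : Type*} [Monoid G] [PartialOrder G] [MulLeftMono G] [MulRightMono G]
variable {H : Type*} [Monoid H] [PartialOrder H] [MulLeftMono H] [MulRightMono H]
variable {C : Type u} [Category.{v} C] [MonoidalCategory C]

lemma ord_refl_app (N : GradedMonad G C) {a : G} (h : a ≤ a) (X : C) :
    (N.ord h).app X = 𝟙 ((N.T a).obj X) :=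
  congrArg (fun (t : N.T a ⟶ N.T a) => t.app X) (N.ord_refl a)

lemma ord_eq_eqToHom (N : GradedMonad G C) {a b : G} (h : a ≤ b) (e : a = b) (X : C) :
    (N.ord h).app X = eqToHom (by rw [e]) := by
  subst e; rw [ord_refl_app]; simp

section Braided
variable [BraidedCategory C]

lemma costr_natural (N : StrongGradedMonad G C) (a : G) {X X' Y Y' : C}
    (f : X ⟶ X') (g : Y ⟶ Y') :
    ((N.T a).map f ⊗ₘ g) ≫ N.costr a X' Y' = N.costr a X Y ≫ (N.T a).map (f ⊗ₘ g) := by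
  unfold StrongGradedMonad.costr
  slice_lhs 1 2 => rw [BraidedCategory.braiding_naturality]
  slice_lhs 2 3 => rw [N.τ_natural a g f]
  simp only [Category.assoc, ← Functor.map_comp,
    BraidedCategory.braiding_naturality]

lemma hom_costr {N : StrongGradedMonad G C} {P : StrongGradedMonad H C}
    {φ : G → H} {φ_one : (1 : H) ≤ φ 1} {φ_mul : ∀ a b : G, φ a * φ b ≤ φ (a * b)}
    (ι : StrongGradedMonadHom N P φ φ_one φ_mul) (a : G) (X Y : C) :
    N.costr a X Y ≫ (ι.app a).app (X ⊗ Y) =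
      ((ι.app a).app X ⊗ₘ 𝟙 Y) ≫ P.costr (φ a) X Y := by
  unfold StrongGradedMonad.costr
  slice_lhs 3 4 => rw [(ι.app a).naturality]
  slice_lhs 2 3 => rw [← ι.strength a Y X]
  slice_lhs 1 2 =>
    rw [← BraidedCategory.braiding_naturality ((ι.app a).app X) (𝟙 Y)]
  simp only [Category.assoc]

lemma hom_app_eqToHom {N : StrongGradedMonad G C} {P : StrongGradedMonad H C}
    {φ : G → H} {φ_one : (1 : H) ≤ φ 1} {φ_mul : ∀ a b : G, φ a * φ b ≤ φ (a * b)}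
    (ι : StrongGradedMonadHom N P φ φ_one φ_mul) {a b : G} (e : a = b) (X : C) :
    eqToHom (show (N.T a).obj X = (N.T b).obj X by rw [e]) ≫ (ι.app b).app X =
      (ι.app a).app X ≫
        eqToHom (show (P.T (φ a)).obj X = (P.T (φ b)).obj X by rw [e]) := by
  subst e; simp


lemma hom_doubleStrength_left {N : StrongGradedMonad G C} {P : StrongGradedMonad H C}
    {φ : G → H} {φ_one : (1 : H) ≤ φ 1} {φ_mul : ∀ a b : G, φ a * φ b ≤ φ (a * b)}
    (ι : StrongGradedMonadHom N P φ φ_one φ_mul) (a b : G) (X Y : C) :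
    N.costr a X ((N.T b).obj Y) ≫ (N.T a).map (N.τ b X Y) ≫ (N.μ a b).app (X ⊗ Y) ≫
        (ι.app (a * b)).app (X ⊗ Y) =
      ((ι.app a).app X ⊗ₘ (ι.app b).app Y) ≫ P.costr (φ a) X ((P.T (φ b)).obj Y) ≫
        (P.T (φ a)).map (P.τ (φ b) X Y) ≫ (P.μ (φ a) (φ b)).app (X ⊗ Y) ≫
        (P.ord (φ_mul a b)).app (X ⊗ Y) := by
  rw [ι.mul a b (X ⊗ Y)]
  slice_lhs 2 3 => rw [(ι.app a).naturality]
  slice_lhs 1 2 => rw [hom_costr ι a X ((N.T b).obj Y)]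
  slice_lhs 3 4 => rw [← Functor.map_comp, ← ι.strength b X Y, Functor.map_comp]
  slice_lhs 2 3 => rw [← costr_natural P (φ a) (𝟙 X) ((ι.app b).app Y)]
  simp only [CategoryTheory.Functor.map_id, Category.assoc]
  slice_lhs 1 2 => rw [tensor_id_comp_id_tensor]
  simp only [Category.assoc]

lemma hom_doubleStrength_right {N : StrongGradedMonad G C} {P : StrongGradedMonad H C}
    {φ : G → H} {φ_one : (1 : H) ≤ φ 1} {φ_mul : ∀ a b : G, φ a * φ b ≤ φ (a * b)}
    (ι : StrongGradedMonadHom N P φ φ_one φ_mul) (a b : G) (X Y : C) :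
    N.τ b ((N.T a).obj X) Y ≫ (N.T b).map (N.costr a X Y) ≫ (N.μ b a).app (X ⊗ Y) ≫
        (ι.app (b * a)).app (X ⊗ Y) =
      ((ι.app a).app X ⊗ₘ (ι.app b).app Y) ≫ P.τ (φ b) ((P.T (φ a)).obj X) Y ≫
        (P.T (φ b)).map (P.costr (φ a) X Y) ≫ (P.μ (φ b) (φ a)).app (X ⊗ Y) ≫
        (P.ord (φ_mul b a)).app (X ⊗ Y) := by
  rw [ι.mul b a (X ⊗ Y)]
  slice_lhs 2 3 => rw [(ι.app b).naturality]
  slice_lhs 1 2 => rw [← ι.strength b ((N.T a).obj X) Y]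
  slice_lhs 3 4 => rw [← Functor.map_comp, hom_costr ι a X Y, Functor.map_comp]
  slice_lhs 2 3 => rw [← P.τ_natural (φ b) ((ι.app a).app X) (𝟙 Y)]
  simp only [CategoryTheory.Functor.map_id, Category.assoc]
  slice_lhs 1 2 => rw [id_tensor_comp_tensor_id]
  simp only [Category.assoc]

end Braided

end Helpers

open StrongGradedMonad in
/-- Centrality theorem: for a centralisable strong graded monad `M` with centre `Zm`
(given by terminal graded central cones, with inclusion `ιZ : Zm ⟶ M`), a strong
`Z(G)`-graded submonad `S` of `M` (with inclusion `ιS : S ⟶ M`) has all of its inclusion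
components graded central cones if and only if `S` is a commutative graded submonad of the
centre `Zm`, via a submonad morphism `h : S ⟶ Zm` through which `ιS` factorises. -/
theorem centrality
    {G : Type*} [Monoid G] [PartialOrder G] [MulLeftMono G] [MulRightMono G]
    {C : Type u} [Category.{v} C] [MonoidalCategory C] [SymmetricCategory C]
    (M : StrongGradedMonad G C)
    -- the centre of `M`
    (Zm : StrongGradedMonad (Submonoid.center G) C)
    (ιZ : StrongGradedMonadHom Zm M (Subtype.val : Submonoid.center G → G)
      (le_of_eq rfl) (fun _ _ => le_of_eq rfl))
    (hZmono : ∀ (z : Submonoid.center G) (X : C), Mono ((ιZ.app z).app X))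
    (hZcomm : Zm.IsCommutative)
    (hZterm : ∀ (z : Submonoid.center G) (X : C),
      M.IsTerminalCentralCone (z : G) (centerComm z) X ((Zm.T z).obj X) ((ιZ.app z).app X))
    -- a strong `Z(G)`-graded submonad `S` of `M`
    (S : StrongGradedMonad (Submonoid.center G) C)
    (ιS : StrongGradedMonadHom S M (Subtype.val : Submonoid.center G → G)
      (le_of_eq rfl) (fun _ _ => le_of_eq rfl))
    (hSmono : ∀ (z : Submonoid.center G) (X : C), Mono ((ιS.app z).app X)) :
    (∀ (z : Submonoid.center G) (X : C),
      M.CentralCone (z : G) (centerComm z) X ((S.T z).obj X) ((ιS.app z).app X)) ↔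
    (S.IsCommutative ∧
      ∃ h : StrongGradedMonadHom S Zm (id : Submonoid.center G → Submonoid.center G)
        (le_of_eq rfl) (fun _ _ => le_of_eq rfl),
        (∀ (z : Submonoid.center G) (X : C), Mono ((h.app z).app X)) ∧
        (∀ (z : Submonoid.center G) (X : C),
          (ιS.app z).app X = (h.app z).app X ≫ (ιZ.app z).app X)) := by
  constructor
  · -- forward direction
    intro hcone
    choose f hf _ using fun (z : Submonoid.center G) (X : C) =>
      (hZterm z X).2 _ _ (hcone z X)
    constructor
    · -- commutativity of S
      intro a b hab X Y
      haveI := hSmono (a * b) (X ⊗ Y)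
      rw [← cancel_mono ((ιS.app (a * b)).app (X ⊗ Y))]
      simp only [Category.assoc]
      rw [hom_doubleStrength_left ιS a b X Y]
      rw [hom_app_eqToHom ιS hab.symm (X ⊗ Y)]
      rw [reassoc_of% (hom_doubleStrength_right ιS a b X Y)]
      rw [← id_tensor_comp_tensor_id ((ιS.app b).app Y) ((ιS.app a).app X)]
      simp only [Category.assoc]
      rw [reassoc_of% (hcone a X (b : G) Y)]
      rw [ord_eq_eqToHom M.toGradedMonad _ (Submonoid.coe_mul _ a b).symm,
        ord_eq_eqToHom M.toGradedMonad _ (Submonoid.coe_mul _ b a).symm]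
      simp only [eqToHom_trans]
    · -- the factorisation through the centre
      have hf' : ∀ (z : Submonoid.center G) (X : C),
          f z X ≫ (ιZ.app z).app X = (ιS.app z).app X := hf
      refine ⟨{ app := fun z => { app := fun X => f z X, naturality := ?_ },
                unit := ?_, mul := ?_, strength := ?_ }, ?_, ?_⟩
      · -- naturality
        intro X Y g
        simp only [id_eq]
        haveI := hZmono z Y
        rw [← cancel_mono ((ιZ.app z).app Y)]
        simp only [Category.assoc]
        rw [hf' z Y, (ιS.app z).naturality g, (ιZ.app z).naturality g,
          ← Category.assoc, hf' z X]
      · -- unit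
        intro X
        simp only [id_eq]
        rw [ord_refl_app Zm.toGradedMonad, Category.comp_id]
        haveI := hZmono 1 X
        rw [← cancel_mono ((ιZ.app 1).app X)]
        simp only [Category.assoc]
        rw [hf' 1 X, ιS.unit X, ιZ.unit X]
      · -- mul
        intro a b X
        simp only [id_eq]
        rw [ord_refl_app Zm.toGradedMonad, Category.comp_id]
        haveI := hZmono (a * b) X
        rw [← cancel_mono ((ιZ.app (a * b)).app X)]
        simp only [Category.assoc]
        rw [hf' (a * b) X, ιS.mul a b X, ιZ.mul a b X]
        slice_rhs 2 3 => rw [(ιZ.app a).naturality (f b X)]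
        slice_rhs 3 4 => rw [← Functor.map_comp, hf' b X]
        slice_rhs 1 2 => rw [hf' a ((S.T b).obj X)]
        simp only [Category.assoc]
      · -- strength
        intro a X Y
        simp only [id_eq]
        haveI := hZmono a (X ⊗ Y)
        rw [← cancel_mono ((ιZ.app a).app (X ⊗ Y))]
        simp only [Category.assoc]
        rw [hf' a (X ⊗ Y), ← ιS.strength a X Y, ← ιZ.strength a X Y]
        slice_lhs 1 2 => rw [← MonoidalCategory.id_tensor_comp]
        rw [hf' a Y]
      · -- mono
        intro z X
        show Mono (f z X)
        have h1 : Mono (f z X ≫ (ιZ.app z).app X) := by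
          rw [hf' z X]; exact hSmono z X
        exact mono_of_mono (f z X) ((ιZ.app z).app X)
      · -- factorisation
        intro z X
        exact (hf' z X).symm
  · -- backward direction
    rintro ⟨hScomm, h, hmono, hfac⟩ z X b Y
    have hc := (hZterm z X).1 b Y
    rw [hfac]
    have e1 : ((h.app z).app X ≫ (ιZ.app z).app X ⊗ₘ 𝟙 ((M.T b).obj Y)) =
        ((h.app z).app X ⊗ₘ 𝟙 ((M.T b).obj Y)) ≫ ((ιZ.app z).app X ⊗ₘ 𝟙 ((M.T b).obj Y)) := by
      rw [tensorHom_comp_tensorHom, Category.comp_id]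
    rw [e1]
    simp only [Category.assoc] at hc ⊢
    rw [hc]
end

section
/- Let G be a pomonoid, C a symmetric monoidal category, T a strong G-graded monad on C, and z ∈ Z(G). If (X, f : X → T^z Y) is a graded central cone of T at (z, Y), then for any morphism g : Y → Z in C, the pair (X, T^z(g) ∘ f) is a graded central cone of T at (z, Z). -/
open CategoryTheory MonoidalCategory

universe v u

variable (G : Type*) [Monoid G] [PartialOrder G] [MulLeftMono G] [MulRightMono G]
variable (C : Type u) [Category.{v} C]

variable [MonoidalCategory C]

variable {G C}

/-- Naturality of the costrength in its first argument. -/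
lemma costr_natural_left
    {G : Type*} [Monoid G] [PartialOrder G] [MulLeftMono G] [MulRightMono G]
    {C : Type u} [Category.{v} C] [MonoidalCategory C] [BraidedCategory C]
    (M : StrongGradedMonad G C) (a : G) {X X' : C} (Y : C) (f : X ⟶ X') :
    ((M.T a).map f ⊗ₘ 𝟙 Y) ≫ M.costr a X' Y =
      M.costr a X Y ≫ (M.T a).map (f ⊗ₘ 𝟙 Y) := by
  simp only [StrongGradedMonad.costr]
  rw [← Category.assoc, BraidedCategory.braiding_naturality, Category.assoc,
    ← Category.assoc (𝟙 Y ⊗ₘ (M.T a).map f)]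
  have h1 : (𝟙 Y ⊗ₘ (M.T a).map f) ≫ M.τ a Y X' = M.τ a Y X ≫ (M.T a).map (𝟙 Y ⊗ₘ f) :=
    M.τ_natural a (𝟙 Y) f
  rw [h1]
  simp only [Category.assoc, ← Functor.map_comp]
  rw [BraidedCategory.braiding_naturality]

/-- `eqToHom` between graded layers commutes with `map`. -/
lemma map_eqToHom_comm
    {G : Type*} [Monoid G] [PartialOrder G] [MulLeftMono G] [MulRightMono G]
    {C : Type u} [Category.{v} C] [MonoidalCategory C]
    (M : StrongGradedMonad G C) {a b : G} (h : a = b) {P Q : C} (φ : P ⟶ Q) :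
    (M.T a).map φ ≫ eqToHom (by rw [h]) = eqToHom (by rw [h]) ≫ (M.T b).map φ := by
  subst h; simp

open StrongGradedMonad in
/-- Postcomposing a graded central cone with the image of any morphism under `T^z`
yields a graded central cone. -/
theorem centralCone_postcompose
    {G : Type*} [Monoid G] [PartialOrder G] [MulLeftMono G] [MulRightMono G]
    {C : Type u} [Category.{v} C] [MonoidalCategory C] [SymmetricCategory C]
    (M : StrongGradedMonad G C) (z : G) (hz : ∀ b : G, z * b = b * z)
    {X Y Z : C} (f : X ⟶ (M.T z).obj Y) (hf : M.CentralCone z hz Y X f) (g : Y ⟶ Z) :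
    M.CentralCone z hz Z X (f ≫ (M.T z).map g) := by
  intro b W
  have hsplit : ((f ≫ (M.T z).map g) ⊗ₘ 𝟙 ((M.T b).obj W)) =
      (f ⊗ₘ 𝟙 ((M.T b).obj W)) ≫ ((M.T z).map g ⊗ₘ 𝟙 ((M.T b).obj W)) := by
    rw [MonoidalCategory.tensorHom_comp_tensorHom, Category.comp_id]
  rw [hsplit]; simp only [Category.assoc]
  -- rewrite the LHS
  have L1 : ((M.T z).map g ⊗ₘ 𝟙 ((M.T b).obj W)) ≫ M.costr z Z ((M.T b).obj W) =
      M.costr z Y ((M.T b).obj W) ≫ (M.T z).map (g ⊗ₘ 𝟙 ((M.T b).obj W)) :=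
    costr_natural_left M z _ g
  have L2 : (g ⊗ₘ 𝟙 ((M.T b).obj W)) ≫ M.τ b Z W = M.τ b Y W ≫ (M.T b).map (g ⊗ₘ 𝟙 W) := by
    have := M.τ_natural b g (𝟙 W)
    simpa using this
  have L3 : (M.T z).map ((M.T b).map (g ⊗ₘ 𝟙 W)) ≫ (M.μ z b).app (Z ⊗ W) =
      (M.μ z b).app (Y ⊗ W) ≫ (M.T (z * b)).map (g ⊗ₘ 𝟙 W) :=
    (M.μ z b).naturality (g ⊗ₘ 𝟙 W)
  -- rewrite the RHS
  have R1 : ((M.T z).map g ⊗ₘ 𝟙 ((M.T b).obj W)) ≫ M.τ b ((M.T z).obj Z) W =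
      M.τ b ((M.T z).obj Y) W ≫ (M.T b).map ((M.T z).map g ⊗ₘ 𝟙 W) := by
    have := M.τ_natural b ((M.T z).map g) (𝟙 W)
    simpa using this
  have R2 : ((M.T z).map g ⊗ₘ 𝟙 W) ≫ M.costr z Z W =
      M.costr z Y W ≫ (M.T z).map (g ⊗ₘ 𝟙 W) :=
    costr_natural_left M z _ g
  have R3 : (M.T b).map ((M.T z).map (g ⊗ₘ 𝟙 W)) ≫ (M.μ b z).app (Z ⊗ W) =
      (M.μ b z).app (Y ⊗ W) ≫ (M.T (b * z)).map (g ⊗ₘ 𝟙 W) :=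
    (M.μ b z).naturality (g ⊗ₘ 𝟙 W)
  calc (f ⊗ₘ 𝟙 ((M.T b).obj W)) ≫ ((M.T z).map g ⊗ₘ 𝟙 ((M.T b).obj W)) ≫
        M.costr z Z ((M.T b).obj W) ≫ (M.T z).map (M.τ b Z W) ≫ (M.μ z b).app (Z ⊗ W)
      = ((f ⊗ₘ 𝟙 ((M.T b).obj W)) ≫ M.costr z Y ((M.T b).obj W) ≫
          (M.T z).map (M.τ b Y W) ≫ (M.μ z b).app (Y ⊗ W)) ≫
          (M.T (z * b)).map (g ⊗ₘ 𝟙 W) := by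
        rw [← Category.assoc ((M.T z).map g ⊗ₘ 𝟙 _), L1]
        simp only [Category.assoc]
        rw [← Category.assoc ((M.T z).map (g ⊗ₘ 𝟙 _)), ← Functor.map_comp, L2,
          Functor.map_comp, Category.assoc, L3]
    _ = ((f ⊗ₘ 𝟙 ((M.T b).obj W)) ≫ M.τ b ((M.T z).obj Y) W ≫
          (M.T b).map (M.costr z Y W) ≫ (M.μ b z).app (Y ⊗ W) ≫
          eqToHom (by rw [hz b])) ≫ (M.T (z * b)).map (g ⊗ₘ 𝟙 W) := by
        rw [hf b W]
    _ = (f ⊗ₘ 𝟙 ((M.T b).obj W)) ≫ ((M.T z).map g ⊗ₘ 𝟙 ((M.T b).obj W)) ≫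
          M.τ b ((M.T z).obj Z) W ≫ (M.T b).map (M.costr z Z W) ≫
          (M.μ b z).app (Z ⊗ W) ≫ eqToHom (by rw [hz b]) := by
        rw [← Category.assoc ((M.T z).map g ⊗ₘ 𝟙 _), R1]
        simp only [Category.assoc]
        rw [← Category.assoc ((M.T b).map ((M.T z).map g ⊗ₘ 𝟙 W)), ← Functor.map_comp, R2,
          Functor.map_comp, Category.assoc]
        rw [← Category.assoc ((M.T b).map ((M.T z).map (g ⊗ₘ 𝟙 W))), R3]
        simp only [Category.assoc]
        rw [← map_eqToHom_comm M (hz b).symm (g ⊗ₘ 𝟙 W)]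
end

section
/- Let G be a pomonoid and T a strong G-graded monad on the category Set (with its cartesian symmetric monoidal structure). For z ∈ Z(G) and a set X, define Z^z X := { t ∈ T^z X | for all b ∈ G, all sets Y, and all s ∈ T^b Y, the two double-strength composites applied to (t,s) agree, i.e. μ^{z,b}(T^z(τ^b)(τ'^z(t,s))) = μ^{b,z}(T^b(τ'^z)(τ^b(t,s))) in T^{z∗b}(X × Y) }, with ι^z_X : Z^z X ⊆ T^z X the subset inclusion. Then (Z^z X, ι^z_X) is a terminal graded central cone of T at (z, X); in particular, every strong G-graded monad on Set is centralisable. -/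
open CategoryTheory MonoidalCategory

universe v u

variable (G : Type*) [Monoid G] [PartialOrder G] [MulLeftMono G] [MulRightMono G]
variable (C : Type u) [Category.{v} C]

variable [MonoidalCategory C]

variable {G C}

open StrongGradedMonad in
theorem set_terminalCentralCone_aux
    {G : Type*} [Monoid G] [PartialOrder G] [MulLeftMono G] [MulRightMono G]
    (M : StrongGradedMonad G (Type u)) (z : G) (hz : ∀ b : G, z * b = b * z) (X : Type u) :
    M.IsTerminalCentralCone z hz X
      {t : (M.T z).obj X //
        ∀ (b : G) (Y : Type u) (s : (M.T b).obj Y),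
          (M.μ z b).app (X ⊗ Y)
              ((M.T z).map (M.τ b X Y) (M.costr z X ((M.T b).obj Y) (t, s))) =
            eqToHom (show (M.T (b * z)).obj (X ⊗ Y) = (M.T (z * b)).obj (X ⊗ Y) by rw [hz b])
              ((M.μ b z).app (X ⊗ Y)
                ((M.T b).map (M.costr z X Y) (M.τ b ((M.T z).obj X) Y (t, s))))}
      (TypeCat.ofHom Subtype.val) := by
  constructor
  · intro b Y
    ext p
    obtain ⟨⟨t, ht⟩, s⟩ := p
    exact ht b Y s
  · intro W f hf
    refine ⟨TypeCat.ofHom (fun w => ⟨f w, fun b Y s => ?_⟩), rfl, fun φ hφ => ?_⟩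
    · exact ConcreteCategory.congr_hom (hf b Y) ((w, s) : W ⊗ (M.T b).obj Y)
    · ext w
      exact ConcreteCategory.congr_hom hφ w

open StrongGradedMonad in
/-- Every strong graded monad on `Set` (the category of types) is centralisable: for every
central gradation `z` and set `X`, the set of elements of `T^z X` that commute (via the two
double-strength composites) with every element of every `T^b Y`, together with the subset
inclusion, is a terminal graded central cone at `(z, X)`. -/
theorem set_terminalCentralCone
    {G : Type*} [Monoid G] [PartialOrder G] [MulLeftMono G] [MulRightMono G]
    (M : StrongGradedMonad G (Type u)) (z : G) (hz : ∀ b : G, z * b = b * z) (X : Type u) :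
    M.IsTerminalCentralCone z hz X
      {t : (M.T z).obj X //
        ∀ (b : G) (Y : Type u) (s : (M.T b).obj Y),
          (M.μ z b).app (X ⊗ Y)
              ((M.T z).map (M.τ b X Y) (M.costr z X ((M.T b).obj Y) (t, s))) =
            eqToHom (show (M.T (b * z)).obj (X ⊗ Y) = (M.T (z * b)).obj (X ⊗ Y) by rw [hz b])
              ((M.μ b z).app (X ⊗ Y)
                ((M.T b).map (M.costr z X Y) (M.τ b ((M.T z).obj X) Y (t, s))))}
      (TypeCat.ofHom Subtype.val) ∧
    M.Centralisable :=
  ⟨set_terminalCentralCone_aux M z hz X,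
   fun z' hz' X' => ⟨_, TypeCat.ofHom Subtype.val, set_terminalCentralCone_aux M z' hz' X'⟩⟩
end

section
/- Let G be a pomonoid and T a strong G-graded monad on Top, the category of topological spaces and continuous maps, with strength taken with respect to the cartesian monoidal structure of Top. Then T is centralisable, with terminal graded central cone at (z, X) (for z ∈ Z(G)) given by the subspace Z^z X := { t ∈ T^z X | for all b ∈ G, all spaces Y, and all s ∈ T^b Y, μ^{z,b}(T^z(τ^b)(τ'^z(t,s))) = μ^{b,z}(T^b(τ'^z)(τ^b(t,s))) in T^{z∗b}(X × Y) } of T^z X, equipped with the subspace topology, together with the inclusion Z^z X ⊆ T^z X. -/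
open CategoryTheory MonoidalCategory

universe v u

variable (G : Type*) [Monoid G] [PartialOrder G] [MulLeftMono G] [MulRightMono G]
variable (C : Type u) [Category.{v} C]

variable [MonoidalCategory C]

variable {G C}

open StrongGradedMonad in
/-- Every strong graded monad on `Top` (with respect to the cartesian monoidal structure) is
centralisable: the terminal graded central cone at `(z, X)` is given by the subspace of `T^z X`
of all points commuting (via the two double-strength composites) with every point of every
`T^b Y`, with the subspace topology, together with the inclusion. -/
theorem topCat_terminalCentralCone
    {G : Type*} [Monoid G] [PartialOrder G] [MulLeftMono G] [MulRightMono G]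
    (M : StrongGradedMonad G TopCat.{u}) (z : G) (hz : ∀ b : G, z * b = b * z) (X : TopCat.{u}) :
    M.IsTerminalCentralCone z hz X
      (TopCat.of {t : (M.T z).obj X //
        ∀ (b : G) (Y : TopCat.{u}) (s : (M.T b).obj Y),
          (M.μ z b).app (X ⊗ Y)
              ((M.T z).map (M.τ b X Y) (M.costr z X ((M.T b).obj Y) (t, s))) =
            eqToHom (show (M.T (b * z)).obj (X ⊗ Y) = (M.T (z * b)).obj (X ⊗ Y) by rw [hz b])
              ((M.μ b z).app (X ⊗ Y)
                ((M.T b).map (M.costr z X Y) (M.τ b ((M.T z).obj X) Y (t, s))))})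
      (TopCat.ofHom ⟨Subtype.val, continuous_subtype_val⟩) ∧
    M.Centralisable := by
  have key : ∀ (z : G) (hz : ∀ b : G, z * b = b * z) (X : TopCat.{u}),
      M.IsTerminalCentralCone z hz X
        (TopCat.of {t : (M.T z).obj X //
          ∀ (b : G) (Y : TopCat.{u}) (s : (M.T b).obj Y),
            (M.μ z b).app (X ⊗ Y)
                ((M.T z).map (M.τ b X Y) (M.costr z X ((M.T b).obj Y) (t, s))) =
              eqToHom (show (M.T (b * z)).obj (X ⊗ Y) = (M.T (z * b)).obj (X ⊗ Y) by rw [hz b])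
                ((M.μ b z).app (X ⊗ Y)
                  ((M.T b).map (M.costr z X Y) (M.τ b ((M.T z).obj X) Y (t, s))))})
        (TopCat.ofHom ⟨Subtype.val, continuous_subtype_val⟩) := by
    intro z hz X
    constructor
    · intro b Y
      apply TopCat.hom_ext
      apply ContinuousMap.ext
      intro p
      exact p.1.2 b Y p.2
    · intro W f hf
      refine ⟨TopCat.ofHom ⟨fun w => ⟨f w, fun b Y s => ConcreteCategory.congr_hom (hf b Y) ((w, s) :
          (W ⊗ (M.T b).obj Y : TopCat.{u}))⟩,
        f.hom.continuous.subtype_mk _⟩, ?_, ?_⟩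
      · rfl
      · intro ψ hψ
        exact TopCat.hom_ext (ContinuousMap.ext fun w => Subtype.ext (ConcreteCategory.congr_hom hψ w))
  exact ⟨key z hz X, fun z' hz' X' => ⟨_, _, key z' hz' X'⟩⟩
end

section
/- Let G be a pomonoid, C a symmetric monoidal category, and T a commutative strong G-graded monad on C. Then for every z ∈ Z(G) and every object X, the pair (T^z X, id_{T^z X}) is a terminal graded central cone of T at (z, X). Consequently T is centralisable and its centre is naturally isomorphic to the restriction of T to the gradations in Z(G); in particular, every commutative graded monad is naturally isomorphic to its centre. -/
open CategoryTheory MonoidalCategory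

universe v u

variable (G : Type*) [Monoid G] [PartialOrder G] [MulLeftMono G] [MulRightMono G]
variable (C : Type u) [Category.{v} C]

variable [MonoidalCategory C]

variable {G C}

open StrongGradedMonad in
/-- Every commutative strong graded monad is centralisable: `(T^z X, id)` is a terminal graded
central cone at every `(z, X)` with `z` central, and consequently the centre of `M` is naturally
isomorphic to the restriction of `M` to the central gradations (the structure map of any terminal
graded central cone is an isomorphism). -/
theorem commutative_centre_iso
    {G : Type*} [Monoid G] [PartialOrder G] [MulLeftMono G] [MulRightMono G]
    {C : Type u} [Category.{v} C] [MonoidalCategory C] [SymmetricCategory C]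
    (M : StrongGradedMonad G C) (hcomm : M.IsCommutative) :
    (∀ (z : G) (hz : ∀ b : G, z * b = b * z) (X : C),
      M.IsTerminalCentralCone z hz X ((M.T z).obj X) (𝟙 ((M.T z).obj X))) ∧
    M.Centralisable ∧
    (∀ (z : G) (hz : ∀ b : G, z * b = b * z) (X Z : C) (ι : Z ⟶ (M.T z).obj X),
      M.IsTerminalCentralCone z hz X Z ι → IsIso ι) := by
  have key : ∀ (z : G) (hz : ∀ b : G, z * b = b * z) (X : C),
      M.IsTerminalCentralCone z hz X ((M.T z).obj X) (𝟙 ((M.T z).obj X)) := by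
    intro z hz X
    constructor
    · intro b Y
      have := hcomm z b (hz b) X Y
      simpa [MonoidalCategory.id_tensorHom_id] using this
    · intro W f _
      exact ⟨f, by simp, fun φ h => by simpa using h⟩
  refine ⟨key, fun z hz X => ⟨_, _, key z hz X⟩, ?_⟩
  intro z hz X Z ι hT
  obtain ⟨hcone, hterm⟩ := hT
  obtain ⟨φ, hφ, _⟩ := hterm ((M.T z).obj X) (𝟙 _) ((key z hz X).1)
  refine ⟨φ, ?_, hφ⟩
  obtain ⟨ψ, hψ, huniq⟩ := hterm Z ι hcone
  have h1 : ι ≫ φ = ψ := huniq _ (by simp [Category.assoc, hφ])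
  have h2 : 𝟙 Z = ψ := huniq _ (by simp)
  rw [h1, ← h2]
end

section
/- Let Σ be a type (alphabet). For all languages L1, L2, L3, L4 ⊆ List Σ, the following inclusion holds: (L1 ∥ L3) · (L2 ∥ L4) ⊆ (L1 · L2) ∥ (L3 · L4), where · denotes language concatenation and ∥ denotes the shuffle product of languages. -/
/-- The set of all interleavings (shuffles) of two words. -/
def wordShuffle {α : Type*} : List α → List α → Set (List α)
  | [], w => {w}
  | w, [] => {w}
  | a :: u, b :: v =>
      (fun x => a :: x) '' wordShuffle u (b :: v) ∪ (fun x => b :: x) '' wordShuffle (a :: u) v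
termination_by u v => u.length + v.length

lemma wordShuffle_nil_left {α : Type*} (w : List α) : wordShuffle [] w = {w} := by
  cases w <;> simp [wordShuffle]

lemma wordShuffle_nil_right {α : Type*} (w : List α) : wordShuffle w [] = {w} := by
  cases w <;> simp [wordShuffle]

lemma wordShuffle_cons {α : Type*} (a : α) (u : List α) (b : α) (v : List α) :
    wordShuffle (a :: u) (b :: v) =
      (fun x => a :: x) '' wordShuffle u (b :: v) ∪ (fun x => b :: x) '' wordShuffle (a :: u) v := by
  simp [wordShuffle]

lemma mem_wordShuffle_append_left {α : Type*} (w : List α) :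
    ∀ u v y : List α, y ∈ wordShuffle u v → w ++ y ∈ wordShuffle u (w ++ v) := by
  induction w with
  | nil => intro u v y h; simpa using h
  | cons c w ih =>
    intro u v y h
    cases u with
    | nil =>
      rw [wordShuffle_nil_left] at h ⊢
      simp_all
    | cons a u' =>
      simp only [List.cons_append]
      rw [wordShuffle_cons]
      exact Or.inr ⟨w ++ y, ih _ _ _ h, rfl⟩

lemma mem_wordShuffle_append_right {α : Type*} (w : List α) :
    ∀ u v y : List α, y ∈ wordShuffle u v → w ++ y ∈ wordShuffle (w ++ u) v := by
  induction w with
  | nil => intro u v y h; simpa using h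
  | cons c w ih =>
    intro u v y h
    cases v with
    | nil =>
      rw [wordShuffle_nil_right] at h ⊢
      simp_all
    | cons b v' =>
      simp only [List.cons_append]
      rw [wordShuffle_cons]
      exact Or.inl ⟨w ++ y, ih _ _ _ h, rfl⟩

lemma wordShuffle_append {α : Type*} :
    ∀ u v u' v' x y : List α, x ∈ wordShuffle u v → y ∈ wordShuffle u' v' →
      x ++ y ∈ wordShuffle (u ++ u') (v ++ v') := by
  suffices h : ∀ n (u v : List α), u.length + v.length = n →
      ∀ u' v' x y : List α, x ∈ wordShuffle u v → y ∈ wordShuffle u' v' →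
        x ++ y ∈ wordShuffle (u ++ u') (v ++ v') by
    intro u v; exact h _ u v rfl
  intro n
  induction n using Nat.strong_induction_on with
  | _ n ih =>
    intro u v hn u' v' x y hx hy
    cases u with
    | nil =>
      rw [wordShuffle_nil_left] at hx
      subst hx
      simpa using mem_wordShuffle_append_left x _ _ _ hy
    | cons a u0 =>
      cases v with
      | nil =>
        rw [wordShuffle_nil_right] at hx
        subst hx
        simpa using mem_wordShuffle_append_right (a :: u0) _ _ _ hy
      | cons b v0 =>
        rw [wordShuffle_cons] at hx
        rcases hx with ⟨x', hx', rfl⟩ | ⟨x', hx', rfl⟩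
        · simp only [List.cons_append]
          rw [wordShuffle_cons]
          exact Or.inl ⟨x' ++ y, ih (u0.length + (b :: v0).length)
            (by simp at hn ⊢; omega) u0 (b :: v0) rfl u' v' x' y hx' hy, rfl⟩
        · simp only [List.cons_append]
          rw [wordShuffle_cons]
          exact Or.inr ⟨x' ++ y, ih ((a :: u0).length + v0.length)
            (by simp at hn ⊢; omega) (a :: u0) v0 rfl u' v' x' y hx' hy, rfl⟩

/-- The shuffle product of two languages. -/
def langShuffle {α : Type*} (L L' : Set (List α)) : Set (List α) :=
  {x | ∃ w ∈ L, ∃ w' ∈ L', x ∈ wordShuffle w w'}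

/-- The concatenation of two languages. -/
def langConcat {α : Type*} (L L' : Set (List α)) : Set (List α) :=
  {x | ∃ w ∈ L, ∃ w' ∈ L', x = w ++ w'}

/-- The duoidal inequality for languages: concatenation of shuffles is contained in the
shuffle of concatenations. -/
theorem langConcat_langShuffle_subset {A : Type*} (L1 L2 L3 L4 : Set (List A)) :
    langConcat (langShuffle L1 L3) (langShuffle L2 L4) ⊆
      langShuffle (langConcat L1 L2) (langConcat L3 L4) := by
  rintro z ⟨x, ⟨u, hu, v, hv, hx⟩, y, ⟨u', hu', v', hv', hy⟩, rfl⟩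
  exact ⟨u ++ u', ⟨u, hu, u', hu', rfl⟩, v ++ v', ⟨v, hv, v', hv', rfl⟩,
    wordShuffle_append u v u' v' x y hx hy⟩
end

section
/- Let G be a pomonoid, C a symmetric monoidal category, and T a strong G-graded monad on C. For every object X of C, the pair (X, η_X : X → T^i X) is a graded central cone of T at (i, X), where i is the unit of G (which lies in Z(G)). -/
open CategoryTheory MonoidalCategory

universe v u

variable (G : Type*) [Monoid G] [PartialOrder G] [MulLeftMono G] [MulRightMono G]
variable (C : Type u) [Category.{v} C]

variable [MonoidalCategory C]

variable {G C}

open StrongGradedMonad in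
/-- For every object `X`, the pair `(X, η_X)` is a graded central cone of `M` at `(1, X)`,
where `1` is the unit of the grading pomonoid (which is central). -/
theorem unit_centralCone
    {G : Type*} [Monoid G] [PartialOrder G] [MulLeftMono G] [MulRightMono G]
    {C : Type u} [Category.{v} C] [MonoidalCategory C] [SymmetricCategory C]
    (M : StrongGradedMonad G C) (X : C) :
    M.CentralCone 1 (fun b => by rw [one_mul, mul_one]) X X (M.η.app X) := by
  intro b Y
  have hη : ∀ (W : C), (M.η.app X ⊗ₘ 𝟙 W) ≫ M.costr 1 X W = M.η.app (X ⊗ W) := by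
    intro W
    have hnat := M.η.naturality (β_ W X).hom
    simp only [Functor.id_map] at hnat
    rw [StrongGradedMonad.costr, ← Category.assoc,
      BraidedCategory.braiding_naturality, Category.assoc, ← Category.assoc (𝟙 W ⊗ₘ M.η.app X),
      M.τ_η, ← hnat]
    simp
  -- LHS
  rw [← Category.assoc, hη]
  have hnat2 := M.η.naturality (M.τ b X Y)
  simp only [Functor.id_map] at hnat2
  rw [← Category.assoc, ← hnat2, Category.assoc, M.left_unit]
  -- RHS
  have hτnat := M.τ_natural b (M.η.app X) (𝟙 Y)
  simp only [CategoryTheory.Functor.map_id] at hτnat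
  rw [← Category.assoc (M.η.app X ⊗ₘ 𝟙 ((M.T b).obj Y)), hτnat, Category.assoc,
    ← Category.assoc ((M.T b).map _), ← Functor.map_comp, hη,
    ← Category.assoc ((M.T b).map _), M.right_unit]
  simp
end

section
/- Let G be a pomonoid, C a symmetric monoidal category, and T a centralisable strong G-graded monad on C with terminal graded central cones (Z^z X, ι^z_X). For all z, z' ∈ Z(G) and every object X, the composite μ^{z,z'}_X ∘ T^z(ι^{z'}_X) ∘ ι^z_{Z^{z'}X} : Z^z Z^{z'} X → T^{z∗z'} X is a graded central cone of T at (z∗z', X); hence it factors uniquely through ι^{z∗z'}_X, yielding the graded multiplication μ^Z of the centre. -/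
set_option linter.unusedSectionVars false


open CategoryTheory MonoidalCategory

universe v u

variable (G : Type*) [Monoid G] [PartialOrder G] [MulLeftMono G] [MulRightMono G]
variable (C : Type u) [Category.{v} C]

variable [MonoidalCategory C]

variable {G C}

namespace StrongGradedMonad

section Helpers

variable {G₀ : Type*} [Monoid G₀] [PartialOrder G₀] [MulLeftMono G₀] [MulRightMono G₀]
variable {D : Type u} [Category.{v} D] [MonoidalCategory D]

section Braided
variable [BraidedCategory D] (M : StrongGradedMonad G₀ D)

lemma costr_natural (a : G₀) {X X' Y Y' : D} (f : X ⟶ X') (g : Y ⟶ Y') :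
    ((M.T a).map f ⊗ₘ g) ≫ M.costr a X' Y' = M.costr a X Y ≫ (M.T a).map (f ⊗ₘ g) := by
  simp only [costr]
  rw [← Category.assoc, BraidedCategory.braiding_naturality]
  slice_lhs 2 3 => rw [M.τ_natural a g f]
  simp only [Category.assoc, ← Functor.map_comp]
  rw [BraidedCategory.braiding_naturality]

lemma τ_natural₁ (a : G₀) {X X' : D} (f : X ⟶ X') (Y : D) :
    (f ⊗ₘ 𝟙 ((M.T a).obj Y)) ≫ M.τ a X' Y = M.τ a X Y ≫ (M.T a).map (f ⊗ₘ 𝟙 Y) := by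
  simpa using M.τ_natural a f (𝟙 Y)

lemma T_eqToHom_natural {a b : G₀} (h : a = b) {X Y : D} (f : X ⟶ Y) :
    eqToHom (show (M.T a).obj X = (M.T b).obj X by rw [h]) ≫ (M.T b).map f =
      (M.T a).map f ≫ eqToHom (show (M.T a).obj Y = (M.T b).obj Y by rw [h]) := by
  subst h; simp

lemma μ_eqToHom_left {a a' b : G₀} (h : a = a') (X : D) :
    eqToHom (show (M.T a).obj ((M.T b).obj X) = (M.T a').obj ((M.T b).obj X) by rw [h]) ≫
        (M.μ a' b).app X =
      (M.μ a b).app X ≫ eqToHom (show (M.T (a * b)).obj X = (M.T (a' * b)).obj X by rw [h]) := by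
  subst h; simp

lemma μ_eqToHom_mid {a b b' : G₀} (h : b = b') (X : D) :
    eqToHom (show (M.T a).obj ((M.T b).obj X) = (M.T a).obj ((M.T b').obj X) by rw [h]) ≫
        (M.μ a b').app X =
      (M.μ a b).app X ≫ eqToHom (show (M.T (a * b)).obj X = (M.T (a * b')).obj X by rw [h]) := by
  subst h; simp

lemma assoc' (a b c : G₀) (X : D) :
    (M.μ a b).app ((M.T c).obj X) ≫ (M.μ (a * b) c).app X =
      (M.T a).map ((M.μ b c).app X) ≫ (M.μ a (b * c)).app X ≫
        eqToHom (show (M.T (a * (b * c))).obj X = (M.T (a * b * c)).obj X by rw [mul_assoc]) := by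
  conv_rhs => rw [← Category.assoc, M.assoc a b c X]
  simp

end Braided

section Symm
variable [SymmetricCategory D] (M : StrongGradedMonad G₀ D)

lemma costr_mul (a b : G₀) (X Y : D) :
    ((M.μ a b).app X ⊗ₘ 𝟙 Y) ≫ M.costr (a * b) X Y =
      M.costr a ((M.T b).obj X) Y ≫ (M.T a).map (M.costr b X Y) ≫ (M.μ a b).app (X ⊗ Y) := by
  simp only [costr, Functor.map_comp]
  slice_lhs 1 2 => rw [BraidedCategory.braiding_naturality]
  slice_lhs 2 3 => rw [M.τ_μ a b Y X]
  slice_lhs 4 5 => rw [← (M.μ a b).naturality (β_ Y X).hom]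
  slice_rhs 3 4 => rw [← Functor.map_comp, SymmetricCategory.symmetry, CategoryTheory.Functor.map_id]
  simp [Functor.comp_map]

lemma centralCone_mul {a c : G₀}
    (ha : ∀ b, a * b = b * a) (hc : ∀ b, c * b = b * c)
    {X W₁ W₂ : D} (f : W₁ ⟶ (M.T a).obj W₂) (g : W₂ ⟶ (M.T c).obj X)
    (hf : M.CentralCone a ha W₂ W₁ f) (hg : M.CentralCone c hc X W₂ g) :
    M.CentralCone (a * c)
      (fun b => by rw [mul_assoc, hc b, ← mul_assoc, ha b, mul_assoc]) X W₁
      (f ≫ (M.T a).map g ≫ (M.μ a c).app X) := by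
  intro b Y
  have nat_ab : ∀ {P Q : D} (h : P ⟶ Q),
      (M.T a).map ((M.T b).map h) ≫ (M.μ a b).app Q =
        (M.μ a b).app P ≫ (M.T (a * b)).map h := fun h => (M.μ a b).naturality h
  have nat_ba : ∀ {P Q : D} (h : P ⟶ Q),
      (M.T b).map ((M.T a).map h) ≫ (M.μ b a).app Q =
        (M.μ b a).app P ≫ (M.T (b * a)).map h := fun h => (M.μ b a).naturality h
  simp only [comp_tensor_id, Category.assoc]
  -- LHS chase
  slice_lhs 3 4 => rw [M.costr_mul a c X ((M.T b).obj Y)]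
  slice_lhs 2 3 => rw [M.costr_natural a g (𝟙 ((M.T b).obj Y))]
  slice_lhs 5 6 => rw [← (M.μ a c).naturality (M.τ b X Y)]
  simp only [Functor.comp_map, Category.assoc]
  slice_lhs 6 7 => rw [M.assoc' a c b (X ⊗ Y)]
  slice_lhs 3 6 =>
    rw [← Functor.map_comp, ← Functor.map_comp, ← Functor.map_comp, hg b Y]
  simp only [Functor.map_comp, Category.assoc]
  slice_lhs 3 4 => rw [← Functor.map_comp, M.τ_natural₁ b g Y, Functor.map_comp]
  slice_lhs 7 8 => rw [eqToHom_map, M.μ_eqToHom_mid (hc b).symm (X ⊗ Y)]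
  slice_lhs 6 7 => rw [M.assoc a b c (X ⊗ Y)]
  slice_lhs 5 6 => rw [nat_ab (M.costr c X Y)]
  slice_lhs 4 5 => rw [nat_ab (g ⊗ₘ 𝟙 Y)]
  slice_lhs 1 4 => rw [hf b Y]
  slice_lhs 5 6 => rw [M.T_eqToHom_natural (ha b).symm (g ⊗ₘ 𝟙 Y)]
  slice_lhs 6 7 => rw [M.T_eqToHom_natural (ha b).symm (M.costr c X Y)]
  slice_lhs 7 8 => rw [M.μ_eqToHom_left (ha b).symm (X ⊗ Y)]
  slice_lhs 4 5 => rw [← nat_ba (g ⊗ₘ 𝟙 Y)]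
  slice_lhs 5 6 => rw [← nat_ba (M.costr c X Y)]
  -- RHS chase
  slice_rhs 3 4 => rw [M.τ_natural₁ b ((M.μ a c).app X) Y]
  simp only [Functor.comp_obj]
  slice_rhs 2 3 => rw [M.τ_natural₁ b ((M.T a).map g) Y]
  slice_rhs 4 5 => rw [← Functor.map_comp, M.costr_mul a c X Y]
  simp only [Functor.map_comp, Category.assoc]
  slice_rhs 3 4 => rw [← Functor.map_comp, M.costr_natural a g (𝟙 Y), Functor.map_comp]
  slice_rhs 6 7 => rw [M.assoc b a c (X ⊗ Y)]
  simp only [Category.assoc, eqToHom_trans]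

end Symm

end Helpers

end StrongGradedMonad

open StrongGradedMonad in
/-- For a centralisable strong graded monad with terminal graded central cones
`(Zc z X, ι z X)`, the composite `μ^{z,z'} ∘ T^z(ι^{z'}) ∘ ι^z : Z^z Z^{z'} X ⟶ T^{z*z'} X`
is a graded central cone at `(z*z', X)`, and hence factors uniquely through `ι^{z*z'}_X`,
yielding the graded multiplication of the centre. -/
theorem centre_mul
    {G : Type*} [Monoid G] [PartialOrder G] [MulLeftMono G] [MulRightMono G]
    {C : Type u} [Category.{v} C] [MonoidalCategory C] [SymmetricCategory C]
    (M : StrongGradedMonad G C)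
    (Zc : Submonoid.center G → C → C)
    (ι : ∀ (z : Submonoid.center G) (X : C), Zc z X ⟶ (M.T (z : G)).obj X)
    (hterm : ∀ (z : Submonoid.center G) (X : C),
      M.IsTerminalCentralCone (z : G) (centerComm z) X (Zc z X) (ι z X))
    (z z' : Submonoid.center G) (X : C) :
    M.CentralCone ((z : G) * (z' : G)) (centerComm (z * z')) X (Zc z (Zc z' X))
      (ι z (Zc z' X) ≫ (M.T (z : G)).map (ι z' X) ≫ (M.μ (z : G) (z' : G)).app X) ∧
    ∃! φ : Zc z (Zc z' X) ⟶ Zc (z * z') X,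
      φ ≫ ι (z * z') X =
        ι z (Zc z' X) ≫ (M.T (z : G)).map (ι z' X) ≫ (M.μ (z : G) (z' : G)).app X := by
  have hcc : M.CentralCone ((z : G) * (z' : G)) (centerComm (z * z')) X (Zc z (Zc z' X))
      (ι z (Zc z' X) ≫ (M.T (z : G)).map (ι z' X) ≫ (M.μ (z : G) (z' : G)).app X) :=
    M.centralCone_mul (centerComm z) (centerComm z') (ι z (Zc z' X)) (ι z' X)
      ((hterm z (Zc z' X)).1) ((hterm z' X).1)
  exact ⟨hcc, (hterm (z * z') X).2 _ _ hcc⟩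
end
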